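/- For any orthonormal basis {|w_0⟩, ..., |w_{d-1}⟩} of ℂ^d with det([w_0 | w_1 | ⋯ | w_{d-1}]) = 1, the supersinglet has the same antisymmetric expansion: |S_d⟩ = (1/√(d!)) Σ_{σ ∈ S_d} sgn(σ) |w_{σ(0)}⟩ ⊗ ⋯ ⊗ |w_{σ(d-1)}⟩. -/

import Mathlib

open scoped BigOperators

noncomputable def supersinglet (d : ℕ) : EuclideanSpace ℂ (Fin d → Fin d) :=
  ((Real.sqrt (Nat.factorial d) : ℝ) : ℂ)⁻¹ •
    ∑ σ : Equiv.Perm (Fin d),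
      ((Equiv.Perm.sign σ : ℤ) : ℂ) • EuclideanSpace.single (⇑σ) (1 : ℂ)

/-- The elementary tensor `w₀ ⊗ w₁ ⊗ ⋯ ⊗ w_{d-1}` as a vector of `(ℂ^d)^{⊗d}`. -/
noncomputable def tensorVec (d : ℕ) (w : Fin d → EuclideanSpace ℂ (Fin d)) :
    EuclideanSpace ℂ (Fin d → Fin d) :=
  WithLp.toLp 2 (fun t => ∏ i, w i (t i))

/-- for any orthonormal basis `w` of `ℂ^d` whose matrix of columns has
determinant 1, the supersinglet has the same antisymmetric expansion in that basis. -/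
theorem supersinglet_basis_independent (d : ℕ) (hd : 3 ≤ d)
    (w : Fin d → EuclideanSpace ℂ (Fin d)) (hw : Orthonormal ℂ w)
    (hdet : Matrix.det (Matrix.of fun i j => w j i) = 1) :
    supersinglet d =
      ((Real.sqrt (Nat.factorial d) : ℝ) : ℂ)⁻¹ •
        ∑ σ : Equiv.Perm (Fin d),
          ((Equiv.Perm.sign σ : ℤ) : ℂ) • tensorVec d (fun i => w (σ i)) := by
  set C : Matrix (Fin d) (Fin d) ℂ := Matrix.of fun i j => w j i with hC
  unfold supersinglet
  congr 1
  ext t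
  have happ1 : (∑ σ : Equiv.Perm (Fin d),
      ((Equiv.Perm.sign σ : ℤ) : ℂ) • EuclideanSpace.single (⇑σ) (1 : ℂ)) t
      = ∑ σ : Equiv.Perm (Fin d),
        ((Equiv.Perm.sign σ : ℤ) : ℂ) * (if t = ⇑σ then 1 else 0) := by
    rw [show ((∑ σ : Equiv.Perm (Fin d),
      ((Equiv.Perm.sign σ : ℤ) : ℂ) • EuclideanSpace.single (⇑σ) (1 : ℂ)) t)
      = ∑ σ : Equiv.Perm (Fin d),
        (((Equiv.Perm.sign σ : ℤ) : ℂ) • EuclideanSpace.single (⇑σ) (1 : ℂ)) t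
      from by rw [WithLp.ofLp_sum, Finset.sum_apply]]
    refine Finset.sum_congr rfl fun σ _ => ?_
    simp [EuclideanSpace.single_apply]
  have happ2 : (∑ σ : Equiv.Perm (Fin d),
      ((Equiv.Perm.sign σ : ℤ) : ℂ) • tensorVec d (fun i => w (σ i))) t
      = ∑ σ : Equiv.Perm (Fin d),
        ((Equiv.Perm.sign σ : ℤ) : ℂ) * ∏ i, w (σ i) (t i) := by
    rw [show ((∑ σ : Equiv.Perm (Fin d),
      ((Equiv.Perm.sign σ : ℤ) : ℂ) • tensorVec d (fun i => w (σ i))) t)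
      = ∑ σ : Equiv.Perm (Fin d),
        (((Equiv.Perm.sign σ : ℤ) : ℂ) • tensorVec d (fun i => w (σ i))) t
      from by simp [WithLp.ofLp_sum]]
    rfl
  rw [happ1, happ2]
  -- RHS is a determinant
  have hrhs : (∑ σ : Equiv.Perm (Fin d),
      ((Equiv.Perm.sign σ : ℤ) : ℂ) * ∏ i, w (σ i) (t i))
      = (C.submatrix t id).det := by
    rw [← Matrix.det_transpose]
    rw [Matrix.det_apply']
    refine Finset.sum_congr rfl fun σ _ => ?_
    congr 1
  rw [hrhs]
  by_cases hinj : Function.Injective t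
  · set τ : Equiv.Perm (Fin d) := Equiv.ofBijective t
      (Finite.injective_iff_bijective.mp hinj) with hτ
    have ht : t = ⇑τ := rfl
    have hcond : ∀ σ : Equiv.Perm (Fin d), (t = ⇑σ) ↔ σ = τ := by
      intro σ
      constructor
      · intro h; ext x; have := congrFun h x; rw [ht] at this; exact (this).symm ▸ rfl
      · intro h; rw [h, ht]
    calc (∑ σ : Equiv.Perm (Fin d),
        ((Equiv.Perm.sign σ : ℤ) : ℂ) * (if t = ⇑σ then 1 else 0))
        = ∑ σ : Equiv.Perm (Fin d),
          (if σ = τ then ((Equiv.Perm.sign σ : ℤ) : ℂ) else 0) := by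
          refine Finset.sum_congr rfl fun σ _ => ?_
          simp only [hcond σ]
          split <;> simp
      _ = ((Equiv.Perm.sign τ : ℤ) : ℂ) := by simp
      _ = (C.submatrix t id).det := by
          rw [ht, Matrix.det_permute, hdet, mul_one]
  · -- t not injective: both sides are zero
    have h1 : ∀ σ : Equiv.Perm (Fin d), t ≠ ⇑σ := by
      intro σ h; exact hinj (h ▸ σ.injective)
    obtain ⟨i, j, hij, hne⟩ : ∃ i j, t i = t j ∧ i ≠ j := by
      simp only [Function.Injective, not_forall] at hinj
      obtain ⟨i, j, h, hne⟩ := hinj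
      exact ⟨i, j, h, hne⟩
    have hdet0 : (C.submatrix t id).det = 0 := by
      apply Matrix.det_zero_of_row_eq hne
      funext k
      simp [Matrix.submatrix_apply, hij]
    rw [hdet0]
    refine Finset.sum_eq_zero fun σ _ => ?_
    rw [if_neg (h1 σ), mul_zero]
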